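/- Let ℝ^{3s} (s ≥ 3) have the inner product g(u_i,v_j)=δ_{ij}, g(t_i,t_j)=-δ_{ij} and curvature tensor A with nonzero components A(u_i,u_j,u_k,t_l)=δ_{il}δ_{jk}-δ_{ik}δ_{jl}. If B̃ = {ũ_i, t̃_i, ṽ_i} is another basis satisfying the same normalizations, then there exist κ₁ ∈ O(s) and matrices κ₂, κ₃, κ₅ ∈ M_s(ℝ) such that ũ_i = Σ_j(κ₁_{ij}u_j + κ₂_{ij}t_j + κ₃_{ij}v_j), t̃_i = Σ_j(κ₁_{ij}t_j + κ₅_{ij}v_j), and ṽ_i = Σ_j κ₁_{ij}v_j. -/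
import Mathlib


/-- `ℝ^{3s}` with coordinates `(u, t, v)`: for `a : V2 s`, `a.1` are the `u`-coordinates,
`a.2.1` the `t`-coordinates and `a.2.2` the `v`-coordinates. -/
abbrev V2 (s : ℕ) := (Fin s → ℝ) × (Fin s → ℝ) × (Fin s → ℝ)

/-- The Euclidean dot product on `Fin s → ℝ`. -/
def dotp {s : ℕ} (x y : Fin s → ℝ) : ℝ := ∑ i, x i * y i

/-- The inner product of `𝒰_{2,s}`: `g(u_i,v_j) = δ_{ij}`, `g(t_i,t_j) = -δ_{ij}`. -/
def g2 {s : ℕ} (a b : V2 s) : ℝ := dotp a.1 b.2.2 + dotp a.2.2 b.1 - dotp a.2.1 b.2.1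

/-- The multilinear extension (respecting the curvature symmetries) of the algebraic curvature
tensor whose only nonzero components up to the `ℤ₂` symmetries are
`A(u_i,u_j,u_k,t_l) = δ_{il}δ_{jk} - δ_{ik}δ_{jl}`. -/
def A2 {s : ℕ} (a b c d : V2 s) : ℝ :=
    (dotp a.1 d.2.1 * dotp b.1 c.1 - dotp a.1 c.1 * dotp b.1 d.2.1)
  - (dotp a.1 c.2.1 * dotp b.1 d.1 - dotp a.1 d.1 * dotp b.1 c.2.1)
  + (dotp c.1 b.2.1 * dotp d.1 a.1 - dotp c.1 a.1 * dotp d.1 b.2.1)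
  - (dotp c.1 a.2.1 * dotp d.1 b.1 - dotp c.1 b.1 * dotp d.1 a.2.1)

def ee {s : ℕ} (i : Fin s) : Fin s → ℝ := fun j => if j = i then 1 else 0

lemma dotp_zero_left {s : ℕ} (y : Fin s → ℝ) : dotp 0 y = 0 := by simp [dotp]
lemma dotp_zero_right {s : ℕ} (y : Fin s → ℝ) : dotp y 0 = 0 := by simp [dotp]
lemma dotp_ee_left {s : ℕ} (i : Fin s) (y : Fin s → ℝ) : dotp (ee i) y = y i := by
  simp [dotp, ee, ite_mul, Finset.sum_ite_eq']
lemma dotp_ee_right {s : ℕ} (y : Fin s → ℝ) (i : Fin s) : dotp y (ee i) = y i := by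
  simp [dotp, ee, mul_ite, Finset.sum_ite_eq']

lemma exists_third {s : ℕ} (hs : 3 ≤ s) (i l : Fin s) : ∃ k : Fin s, k ≠ i ∧ k ≠ l := by
  by_contra h
  push_neg at h
  have hsub : (Finset.univ : Finset (Fin s)) ⊆ {i, l} := by
    intro x _
    simp only [Finset.mem_insert, Finset.mem_singleton]
    by_cases hx : x = i
    · exact Or.inl hx
    · exact Or.inr (h x hx)
  have h1 : Fintype.card (Fin s) ≤ ({i, l} : Finset (Fin s)).card := by
    simpa using Finset.card_le_card hsub
  have h2 : ({i, l} : Finset (Fin s)).card ≤ 2 :=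
    (Finset.card_insert_le _ _).trans (by simp)
  simp only [Fintype.card_fin] at h1
  omega

lemma core_lemma {s : ℕ} (hs : 3 ≤ s) (M N : Matrix (Fin s) (Fin s) ℝ)
    (hN : N = M * M.transpose)
    (hH : ∀ i j k l, M i l * N j k - N i k * M j l =
      (if i = l then (1:ℝ) else 0) * (if j = k then 1 else 0) -
      (if i = k then (1:ℝ) else 0) * (if j = l then 1 else 0)) :
    M = 1 ∧ N = 1 := by
  have key : ∀ i k l : Fin s, i ≠ l → i ≠ k → k ≠ l → M i l = 0 ∧ N i k = 0 := by
    intro i k l hil hik hkl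
    have h0 : ∀ q, M i l * N q k - N i k * M q l = 0 := by
      intro q
      have := hH i q k l
      simp [hil, hik] at this
      exact this
    have h1 : M l l * N k k - N l k * M k l = 1 := by
      have := hH l k k l
      simp [hkl, Ne.symm hkl] at this
      exact this
    constructor
    · linear_combination (-(M i l)) * h1 + (M l l) * h0 k + (-(M k l)) * h0 l
    · linear_combination (-(N i k)) * h1 + (N l k) * h0 k + (-(N k k)) * h0 l
  have hM0 : ∀ i l, i ≠ l → M i l = 0 := by
    intro i l hil
    obtain ⟨k, hki, hkl⟩ := exists_third hs i l
    exact (key i k l hil (Ne.symm hki) hkl).1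
  have hN0 : ∀ i k, i ≠ k → N i k = 0 := by
    intro i k hik
    obtain ⟨l, hli, hlk⟩ := exists_third hs i k
    exact (key i k l (Ne.symm hli) hik (Ne.symm hlk)).2
  have hdiag : ∀ l k, l ≠ k → M l l * N k k = 1 := by
    intro l k hlk
    have h1 := hH l k k l
    simp [hlk, Ne.symm hlk] at h1
    rw [hN0 l k hlk] at h1
    linarith [h1]
  have hNd : ∀ k, N k k = M k k ^ 2 := by
    intro k
    have : N k k = ∑ m, M k m * M k m := by
      rw [hN]; simp [Matrix.mul_apply, Matrix.transpose_apply]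
    rw [this, Finset.sum_eq_single k]
    · ring
    · intro m _ hm
      rw [hM0 k m (Ne.symm hm)]; ring
    · simp
  have hMd : ∀ l, M l l = 1 := by
    intro l
    obtain ⟨k, hki, hkl⟩ := exists_third hs l l
    have e1 : M l l * M k k ^ 2 = 1 := by rw [← hNd]; exact hdiag l k (Ne.symm hki)
    have e2 : M k k * M l l ^ 2 = 1 := by rw [← hNd]; exact hdiag k l hki
    set a := M l l
    set b := M k k
    have hab : a * b * (b - a) = 0 := by linear_combination e1 - e2
    have habne : a * b ≠ 0 := by
      intro h
      rw [show a * b ^ 2 = (a*b)*b by ring, h, zero_mul] at e1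
      exact one_ne_zero e1.symm
    have hba : b = a := by
      rcases mul_eq_zero.mp hab with h | h
      · exact absurd h habne
      · linarith
    rw [hba] at e1
    have hfac : (a - 1) * (a^2 + a + 1) = 0 := by linear_combination e1
    have hpos : a^2 + a + 1 > 0 := by nlinarith [sq_nonneg (2*a + 1)]
    rcases mul_eq_zero.mp hfac with h | h
    · linarith
    · linarith
  constructor
  · ext i j
    by_cases h : i = j
    · subst h; simp [Matrix.one_apply, hMd]
    · simp [Matrix.one_apply, h, hM0 i j h]
  · ext i j
    by_cases h : i = j
    · subst h; simp [Matrix.one_apply, hNd, hMd]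
    · simp [Matrix.one_apply, h, hN0 i j h]

lemma mulT_apply {s : ℕ} (P Q : Matrix (Fin s) (Fin s) ℝ) (i j : Fin s) :
    (P * Q.transpose) i j = dotp (fun m => P i m) (fun m => Q j m) := by
  simp [Matrix.mul_apply, Matrix.transpose_apply, dotp]

/-- Lemma 5.2: any normalized basis `{ũ_i, t̃_i, ṽ_i}` of `𝒰_{2,s}` (i.e. a basis whose
change-of-basis map `Φ` preserves both `g` and `A`) is obtained from the standard one by
`κ₁ ∈ O(s)` and matrices `κ₂, κ₃, κ₅`. -/
theorem stmt17 (s : ℕ) (hs : 3 ≤ s)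
    (ut tt vt : Fin s → V2 s) (Φ : V2 s → V2 s)
    (hΦ : ∀ a : V2 s,
      Φ a = (∑ i, a.1 i • ut i) + (∑ i, a.2.1 i • tt i) + (∑ i, a.2.2 i • vt i))
    (hbij : Function.Bijective Φ)
    (hg : ∀ a b : V2 s, g2 (Φ a) (Φ b) = g2 a b)
    (hA : ∀ a b c d : V2 s, A2 (Φ a) (Φ b) (Φ c) (Φ d) = A2 a b c d) :
    ∃ κ₁ κ₂ κ₃ κ₅ : Matrix (Fin s) (Fin s) ℝ,
      κ₁ * κ₁.transpose = 1 ∧ κ₁.transpose * κ₁ = 1 ∧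
      (∀ i, ut i = ((fun j => κ₁ i j), (fun j => κ₂ i j), (fun j => κ₃ i j))) ∧
      (∀ i, tt i = (0, (fun j => κ₁ i j), (fun j => κ₅ i j))) ∧
      (∀ i, vt i = (0, 0, (fun j => κ₁ i j))) := by
  -- images of the standard basis vectors
  have hu : ∀ i, Φ (ee i, 0, 0) = ut i := by
    intro i
    rw [hΦ]
    simp [ee, ite_smul, Finset.sum_ite_eq']
  have ht : ∀ i, Φ (0, ee i, 0) = tt i := by
    intro i
    rw [hΦ]
    simp [ee, ite_smul, Finset.sum_ite_eq']
  have hv : ∀ i, Φ (0, 0, ee i) = vt i := by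
    intro i
    rw [hΦ]
    simp [ee, ite_smul, Finset.sum_ite_eq']
  -- A2 vanishes when the first argument has zero u- and t-components
  have hA0 : ∀ (x b c d : V2 s), x.1 = 0 → x.2.1 = 0 → A2 x b c d = 0 := by
    intro x b c d h1 h2
    simp [A2, h1, h2, dotp_zero_left, dotp_zero_right]
  -- characterization of the kernel space
  have hW : ∀ x : V2 s, (∀ b c d, A2 x b c d = 0) → x.1 = 0 ∧ x.2.1 = 0 := by
    intro x hx
    have hx1 : x.1 = 0 := by
      funext l
      obtain ⟨j, -, hj⟩ := exists_third hs l l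
      have h := hx (ee j, 0, 0) (ee j, 0, 0) ((0 : Fin s → ℝ), ee l, (0 : Fin s → ℝ))
      simp [A2, dotp_zero_left, dotp_zero_right, dotp_ee_left, dotp_ee_right, ee, hj, Ne.symm hj] at h
      simpa using h
    have hx2 : x.2.1 = 0 := by
      funext k
      obtain ⟨j, -, hj⟩ := exists_third hs k k
      have h := hx (ee j, 0, 0) (ee k, 0, 0) (ee j, 0, 0)
      simp [A2, hx1, dotp_zero_left, dotp_zero_right, dotp_ee_left, dotp_ee_right, ee, hj, Ne.symm hj] at h
      simpa using h
    exact ⟨hx1, hx2⟩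
  -- the tilde v's lie in the kernel space
  have hvt : ∀ i, (vt i).1 = 0 ∧ (vt i).2.1 = 0 := by
    intro i
    apply hW
    intro b c d
    obtain ⟨b', rfl⟩ := hbij.2 b
    obtain ⟨c', rfl⟩ := hbij.2 c
    obtain ⟨d', rfl⟩ := hbij.2 d
    rw [← hv i, hA]
    exact hA0 _ _ _ _ rfl rfl
  -- the tilde t's have zero u-component
  have htt1 : ∀ i, (tt i).1 = 0 := by
    intro i
    funext j
    obtain ⟨x, hx⟩ := hbij.2 ((0 : Fin s → ℝ), (0 : Fin s → ℝ), ee j)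
    have hxW : x.1 = 0 ∧ x.2.1 = 0 := by
      apply hW
      intro b c d
      rw [← hA x b c d, hx]
      exact hA0 _ _ _ _ rfl rfl
    have hg1 := hg ((0 : Fin s → ℝ), ee i, (0 : Fin s → ℝ)) x
    rw [ht i, hx] at hg1
    simp [g2, dotp_zero_left, dotp_zero_right, dotp_ee_left, dotp_ee_right, hxW.2] at hg1
    simpa using hg1
  -- metric identities
  have hPEd : ∀ i j, dotp (ut i).1 (vt j).2.2 = (if i = j then (1:ℝ) else 0) := by
    intro i j
    have h := hg ((ee i : Fin s → ℝ), 0, 0) ((0 : Fin s → ℝ), (0 : Fin s → ℝ), ee j)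
    rw [hu i, hv j] at h
    simp [g2, (hvt j).1, (hvt j).2, dotp_zero_left, dotp_zero_right, dotp_ee_left,
      dotp_ee_right, ee] at h
    simpa [eq_comm] using h
  have hYYd : ∀ i j, dotp (tt i).2.1 (tt j).2.1 = (if i = j then (1:ℝ) else 0) := by
    intro i j
    have h := hg ((0 : Fin s → ℝ), ee i, (0 : Fin s → ℝ)) ((0 : Fin s → ℝ), ee j, (0 : Fin s → ℝ))
    rw [ht i, ht j] at h
    simp [g2, htt1 i, htt1 j, dotp_zero_left, dotp_zero_right, dotp_ee_left,
      dotp_ee_right, ee] at h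
    simpa [eq_comm] using h
  -- curvature identity
  have hHd : ∀ i j k l, dotp (ut i).1 (tt l).2.1 * dotp (ut j).1 (ut k).1
      - dotp (ut i).1 (ut k).1 * dotp (ut j).1 (tt l).2.1
      = (if i = l then (1:ℝ) else 0) * (if j = k then 1 else 0)
      - (if i = k then (1:ℝ) else 0) * (if j = l then 1 else 0) := by
    intro i j k l
    have h := hA ((ee i : Fin s → ℝ), 0, 0) ((ee j : Fin s → ℝ), 0, 0)
      ((ee k : Fin s → ℝ), 0, 0) ((0 : Fin s → ℝ), ee l, (0 : Fin s → ℝ))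
    rw [hu i, hu j, hu k, ht l] at h
    simp only [A2, htt1 l, dotp_zero_left, dotp_zero_right, dotp_ee_left, dotp_ee_right,
      mul_zero, zero_mul, sub_zero, zero_sub, add_zero, sub_neg_eq_add, neg_zero,
      zero_add] at h
    rw [h]
    simp [ee, eq_comm]
  -- matrices
  set Pm : Matrix (Fin s) (Fin s) ℝ := Matrix.of fun i j => (ut i).1 j with hPm
  set Ym : Matrix (Fin s) (Fin s) ℝ := Matrix.of fun i j => (tt i).2.1 j with hYm
  set Em : Matrix (Fin s) (Fin s) ℝ := Matrix.of fun i j => (vt i).2.2 j with hEm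
  have hYY : Ym * Ym.transpose = 1 := by
    ext i j
    rw [mulT_apply]
    rw [show dotp (fun m => Ym i m) (fun m => Ym j m)
        = dotp (tt i).2.1 (tt j).2.1 from rfl, hYYd]
    simp [Matrix.one_apply]
  have hPE : Pm * Em.transpose = 1 := by
    ext i j
    rw [mulT_apply]
    rw [show dotp (fun m => Pm i m) (fun m => Em j m)
        = dotp (ut i).1 (vt j).2.2 from rfl, hPEd]
    simp [Matrix.one_apply]
  have hYtY : Ym.transpose * Ym = 1 := mul_eq_one_comm.mp hYY
  have hNrel : Pm * Pm.transpose = (Pm * Ym.transpose) * (Pm * Ym.transpose).transpose := by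
    rw [Matrix.transpose_mul, Matrix.transpose_transpose, Matrix.mul_assoc,
      ← Matrix.mul_assoc Ym.transpose, hYtY, Matrix.one_mul]
  have hHm : ∀ i j k l, (Pm * Ym.transpose) i l * (Pm * Pm.transpose) j k
      - (Pm * Pm.transpose) i k * (Pm * Ym.transpose) j l
      = (if i = l then (1:ℝ) else 0) * (if j = k then 1 else 0)
      - (if i = k then (1:ℝ) else 0) * (if j = l then 1 else 0) := by
    intro i j k l
    rw [mulT_apply, mulT_apply, mulT_apply, mulT_apply]
    exact hHd i j k l
  obtain ⟨hM1, hN1⟩ := core_lemma hs (Pm * Ym.transpose) (Pm * Pm.transpose) hNrel hHm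
  have hPtP : Pm.transpose * Pm = 1 := mul_eq_one_comm.mp hN1
  have hPY : Pm = Ym := by
    calc Pm = Pm * (Ym.transpose * Ym) := by rw [hYtY, Matrix.mul_one]
    _ = (Pm * Ym.transpose) * Ym := by rw [Matrix.mul_assoc]
    _ = Ym := by rw [hM1, Matrix.one_mul]
  have hPEm : Em = Pm := by
    have h1 : Em.transpose = Pm.transpose := by
      calc Em.transpose = (Pm.transpose * Pm) * Em.transpose := by rw [hPtP, Matrix.one_mul]
      _ = Pm.transpose * (Pm * Em.transpose) := by rw [Matrix.mul_assoc]
      _ = Pm.transpose := by rw [hPE, Matrix.mul_one]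
    have := congrArg Matrix.transpose h1
    simpa using this
  refine ⟨Pm, Matrix.of fun i j => (ut i).2.1 j, Matrix.of fun i j => (ut i).2.2 j,
    Matrix.of fun i j => (tt i).2.2 j, hN1, hPtP, ?_, ?_, ?_⟩
  · intro i
    rfl
  · intro i
    rw [hPY]
    exact Prod.ext (htt1 i) rfl
  · intro i
    rw [hPEm.symm]
    exact Prod.ext (hvt i).1 (Prod.ext (hvt i).2 rfl)
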